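/- arXiv:2411.00318 — 2 statements merged into one kernel-verified Lean document; each statement's English description precedes it below -/
import Mathlib

section
/- If the pair (C_k, A_k) of an M-periodic system is observable at every phase (i.e., the n-step time-varying observability matrix starting at each phase k has rank n), then the cyclic reformulation pair (Č, Ǎ) is observable: the observability matrix of (Č, Ǎ) of depth Mn has rank Mn. -/
open Matrix
open Fin.NatCast

/-- Block cyclic shift matrix: block (i, i+1 mod M) equals I_q, zeros elsewhere. -/
def cycShift (M q : ℕ) [NeZero M] : Matrix (Fin M × Fin q) (Fin M × Fin q) ℝ :=
  fun a b => if b.1 = a.1 + 1 ∧ b.2 = a.2 then 1 else 0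

/-- Block diagonal: all off-diagonal p×q blocks vanish. -/
def IsBlockDiag {M p q : ℕ} (K : Matrix (Fin M × Fin p) (Fin M × Fin q) ℝ) : Prop :=
  ∀ i j : Fin M, i ≠ j → ∀ s t, K (i, s) (j, t) = 0

/-- Cyclic: the only possibly nonzero blocks are at positions ((j+1) mod M, j). -/
def IsCyclicMat {M p q : ℕ} [NeZero M] (K : Matrix (Fin M × Fin p) (Fin M × Fin q) ℝ) : Prop :=
  ∀ i j : Fin M, i ≠ j + 1 → ∀ s t, K (i, s) (j, t) = 0

/-- Cyclic matrix built from blocks `Bs j` placed at positions ((j+1) mod M, j). -/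
def cycOf {M p q : ℕ} [NeZero M] (Bs : Fin M → Matrix (Fin p) (Fin q) ℝ) :
    Matrix (Fin M × Fin p) (Fin M × Fin q) ℝ :=
  fun a b => if a.1 = b.1 + 1 then Bs b.1 a.2 b.2 else 0

/-- Block diagonal matrix built from diagonal blocks `Ds j`. -/
def bdiagOf {M p q : ℕ} (Ds : Fin M → Matrix (Fin p) (Fin q) ℝ) :
    Matrix (Fin M × Fin p) (Fin M × Fin q) ℝ :=
  fun a b => if a.1 = b.1 then Ds b.1 a.2 b.2 else 0

/-- Product A_{k+j-1} A_{k+j-2} ··· A_k (j factors). -/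
noncomputable def prodA {M n : ℕ} [NeZero M] (As : Fin M → Matrix (Fin n) (Fin n) ℝ)
    (k : Fin M) (j : ℕ) : Matrix (Fin n) (Fin n) ℝ :=
  (((List.range j).map (fun t => As (k + ((j - 1 - t : ℕ) : Fin M)))).prod)

lemma rank_eq_card_iff_inj {m p : Type*} [Fintype m] [Fintype p] (A : Matrix m p ℝ) :
    A.rank = Fintype.card p ↔ ∀ v, A.mulVec v = 0 → v = 0 := by
  have hrn := LinearMap.finrank_range_add_finrank_ker A.mulVecLin
  have hd : Module.finrank ℝ (p → ℝ) = Fintype.card p := Module.finrank_pi ℝ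
  rw [hd] at hrn
  constructor
  · intro h v hv
    have hker : Module.finrank ℝ (LinearMap.ker A.mulVecLin) = 0 := by
      have : A.rank = Module.finrank ℝ (LinearMap.range A.mulVecLin) := rfl
      omega
    have hbot : LinearMap.ker A.mulVecLin = ⊥ :=
      Submodule.finrank_eq_zero.mp hker
    have : v ∈ LinearMap.ker A.mulVecLin := hv
    rw [hbot] at this
    simpa using this
  · intro h
    have hbot : LinearMap.ker A.mulVecLin = ⊥ := by
      ext v; simp only [LinearMap.mem_ker, Submodule.mem_bot]
      exact ⟨fun hv => h v hv, fun hv => by simp [hv]⟩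
    have hker : Module.finrank ℝ (LinearMap.ker A.mulVecLin) = 0 := by
      rw [hbot]; simp
    have : A.rank = Module.finrank ℝ (LinearMap.range A.mulVecLin) := rfl
    omega

lemma prodA_succ {M n : ℕ} [NeZero M] (As : Fin M → Matrix (Fin n) (Fin n) ℝ)
    (k : Fin M) (p : ℕ) : prodA As k (p + 1) = prodA As (k + 1) p * As k := by
  unfold prodA
  rw [List.range_succ, List.map_append, List.prod_append]
  congr 1
  · apply congrArg
    apply List.map_congr_left
    intro t ht
    rw [List.mem_range] at ht
    congr 1
    have h1 : (p + 1 - 1 - t : ℕ) = (p - 1 - t) + 1 := by omega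
    rw [h1]
    push_cast
    abel
  · simp

lemma cycOf_pow {M n : ℕ} [NeZero M] (As : Fin M → Matrix (Fin n) (Fin n) ℝ) (p : ℕ)
    (i j : Fin M) (s t : Fin n) :
    ((cycOf As) ^ p) (i, s) (j, t) =
      if i = j + (p : Fin M) then prodA As j p s t else 0 := by
  induction p generalizing i j s t with
  | zero =>
    simp only [pow_zero, prodA, List.range_zero, List.map_nil, List.prod_nil,
      Nat.cast_zero, add_zero, Matrix.one_apply]
    by_cases h : i = j
    · subst h
      simp [Matrix.one_apply, Prod.ext_iff]
    · simp [Prod.ext_iff, h]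
  | succ p ih =>
    rw [pow_succ, Matrix.mul_apply]
    rw [Fintype.sum_prod_type]
    have key : ∀ m : Fin M, ∀ u : Fin n,
        ((cycOf As) ^ p) (i, s) (m, u) * cycOf As (m, u) (j, t)
        = if m = j + 1 then
            (if i = j + ((p : Fin M) + 1) then prodA As (j+1) p s u * As j u t else 0)
          else 0 := by
      intro m u
      by_cases hm : m = j + 1
      · subst hm
        rw [ih]
        simp only [cycOf, if_pos rfl]
        by_cases hi : i = j + 1 + (p : Fin M)
        · have h2 : i = j + ((p : Fin M) + 1) := by rw [hi]; abel
          have h3 : j + 1 + (p : Fin M) = j + ((p : Fin M) + 1) := by abel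
          simp [hi, h2, h3]
        · have h2 : ¬ i = j + ((p : Fin M) + 1) := fun h => hi (by rw [h]; abel)
          simp [hi, h2]
      · simp [cycOf, hm]
    simp only [key]
    rw [Finset.sum_eq_single (j + 1)]
    · simp only [if_pos rfl]
      by_cases hi : i = j + ((p : Fin M) + 1)
      · have hc : (((p : ℕ) + 1 : ℕ) : Fin M) = (p : Fin M) + 1 := by push_cast; ring
        rw [hc, if_pos hi, prodA_succ, Matrix.mul_apply]
        simp [hi]
      · have h2 : ¬ i = j + (((p : ℕ) + 1 : ℕ) : Fin M) := by
          push_cast; exact hi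
        simp [hi, h2]
    · intro b _ hb
      simp [hb]
    · intro h
      exact absurd (Finset.mem_univ _) h

lemma bdiag_cycOf_pow {M n l : ℕ} [NeZero M]
    (As : Fin M → Matrix (Fin n) (Fin n) ℝ) (Cs : Fin M → Matrix (Fin l) (Fin n) ℝ) (p : ℕ)
    (i j : Fin M) (s : Fin l) (t : Fin n) :
    (bdiagOf Cs * (cycOf As) ^ p) (i, s) (j, t) =
      if i = j + (p : Fin M) then (Cs i * prodA As j p) s t else 0 := by
  rw [Matrix.mul_apply, Fintype.sum_prod_type]
  have key : ∀ m : Fin M, ∀ u : Fin n,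
      bdiagOf Cs (i, s) (m, u) * ((cycOf As) ^ p) (m, u) (j, t)
      = if m = i then
          (if i = j + (p : Fin M) then Cs i s u * prodA As j p u t else 0)
        else 0 := by
    intro m u
    by_cases hm : m = i
    · subst hm
      rw [cycOf_pow]
      simp only [bdiagOf, if_pos rfl]
      by_cases hi : m = j + (p : Fin M) <;> simp [hi]
    · simp [bdiagOf, Ne.symm hm, hm]
  simp only [key]
  rw [Finset.sum_eq_single i]
  · by_cases hi : i = j + (p : Fin M)
    · simp [hi, Matrix.mul_apply]
    · simp [hi]
  · intro b _ hb
    simp [hb]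
  · intro h
    exact absurd (Finset.mem_univ _) h

theorem stmt17 (M n l : ℕ) [NeZero M]
    (As : Fin M → Matrix (Fin n) (Fin n) ℝ) (Cs : Fin M → Matrix (Fin l) (Fin n) ℝ)
    (hobs : ∀ k : Fin M,
      (Matrix.rank (fun (a : Fin n × Fin l) (t : Fin n) =>
        (Cs (k + ((a.1 : ℕ) : Fin M)) * prodA As k (a.1 : ℕ)) a.2 t)) = n) :
    Matrix.rank (fun (a : Fin (M * n) × (Fin M × Fin l)) (c : Fin M × Fin n) =>
      (bdiagOf Cs * (cycOf As) ^ (a.1 : ℕ)) a.2 c) = M * n := by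
  have hcard : Fintype.card (Fin M × Fin n) = M * n := by simp
  refine Eq.trans ((rank_eq_card_iff_inj _).mpr ?_) hcard
  intro v hv
  funext c
  obtain ⟨j, t⟩ := c
  -- n > 0 since t : Fin n
  have hn : 0 < n := t.pos
  have hM : 0 < M := Nat.pos_of_ne_zero (NeZero.ne M)
  have hw := (rank_eq_card_iff_inj
      (fun (a : Fin n × Fin l) (u : Fin n) =>
        (Cs (j + ((a.1 : ℕ) : Fin M)) * prodA As j (a.1 : ℕ)) a.2 u)).mp
    (by simpa using hobs j) (fun u => v (j, u)) ?_
  · exact congrFun hw t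
  · funext a
    obtain ⟨p, s⟩ := a
    have hlt : (p : ℕ) < M * n := lt_of_lt_of_le p.2 (Nat.le_mul_of_pos_left n hM)
    have h0 := congrFun hv ((⟨(p : ℕ), hlt⟩ : Fin (M * n)), (j + ((p : ℕ) : Fin M), s))
    simp only [Matrix.mulVec, dotProduct, Pi.zero_apply] at h0 ⊢
    rw [Fintype.sum_prod_type] at h0
    have hval : (((⟨(p : ℕ), hlt⟩ : Fin (M * n)) : ℕ)) = (p : ℕ) := rfl
    simp only [hval, bdiag_cycOf_pow] at h0
    rw [Finset.sum_eq_single j] at h0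
    · simpa using h0
    · intro j' _ hj'
      have : ¬ (j + ((p : ℕ) : Fin M) = j' + ((p : ℕ) : Fin M)) := by
        intro h; exact hj' (by exact (add_right_cancel h).symm)
      simp [this]
    · intro h
      exact absurd (Finset.mem_univ _) h
end

section
/- For the cyclic matrix Ǎ with blocks A_0,...,A_{M-1}, the characteristic polynomial of Ǎ evaluated in λ^M satisfies: det(λ^M I_{Mn} − Ǎ^M) = Π_{i=0}^{M-1} det(λ^M I_n − Ψ_i), where Ψ_i = A_{(i-1) mod M}···A_{i mod M} is the monodromy matrix at phase i; in particular the eigenvalues of Ǎ^M are the eigenvalues of the M monodromy matrices combined. -/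
open Matrix

/-- Phase-i monodromy matrix Ψ_i = A_{i+M-1} A_{i+M-2} ··· A_i. -/
noncomputable def monodromy {M n : ℕ} [NeZero M] (As : Fin M → Matrix (Fin n) (Fin n) ℝ)
    (i : Fin M) : Matrix (Fin n) (Fin n) ℝ :=
  (((List.range M).map (fun k => As (i + Fin.ofNat M (M - 1 - k : ℕ)))).prod)

open Fin.NatCast

noncomputable def mAux {M n : ℕ} [NeZero M] (As : Fin M → Matrix (Fin n) (Fin n) ℝ)
    (k : ℕ) (j : Fin M) : Matrix (Fin n) (Fin n) ℝ :=
  (((List.range k).map (fun l => As (j + ((k - 1 - l : ℕ) : Fin M)))).prod)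

lemma mAux_succ {M n : ℕ} [NeZero M] (As : Fin M → Matrix (Fin n) (Fin n) ℝ)
    (k : ℕ) (j : Fin M) : mAux As (k+1) j = As (j + (k : Fin M)) * mAux As k j := by
  unfold mAux
  rw [List.range_succ_eq_map]
  have h1 : (k + 1 - 1 - 0 : ℕ) = k := by omega
  have h2 : ∀ l : ℕ, (k + 1 - 1 - (l+1) : ℕ) = k - 1 - l := by omega
  simp only [List.map_cons, List.map_map, List.prod_cons, h1]
  congr 2
  congr 1
  funext l
  simp only [Function.comp_apply, Nat.succ_eq_add_one, h2]

lemma cycOf_pow_s18 {M n : ℕ} [NeZero M] (As : Fin M → Matrix (Fin n) (Fin n) ℝ) (k : ℕ) :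
    (cycOf As) ^ k
      = fun a b => if a.1 = b.1 + (k : Fin M) then mAux As k b.1 a.2 b.2 else 0 := by
  induction k with
  | zero =>
    ext ⟨i,s⟩ ⟨j,t⟩
    simp [mAux, Matrix.one_apply, Prod.ext_iff, ite_and]
  | succ k ih =>
    rw [pow_succ', ih]
    ext ⟨i,s⟩ ⟨j,t⟩
    erw [Matrix.mul_apply]
    rw [Fintype.sum_prod_type]
    simp only [cycOf, mul_ite, ite_mul, zero_mul, mul_zero]
    have hc : ((k + 1 : ℕ) : Fin M) = (k : Fin M) + 1 := by push_cast; ring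
    rw [Finset.sum_eq_single (j + (k : Fin M))]
    · simp only [if_pos rfl, hc, ← add_assoc]
      by_cases h : i = j + (k : Fin M) + 1
      · simp [h, mAux_succ, Matrix.mul_apply]
      · simp [h]
    · intro b _ hb
      simp [hb]
    · simp

theorem stmt18 (M n : ℕ) [NeZero M] (As : Fin M → Matrix (Fin n) (Fin n) ℝ) (lam : ℝ) :
    Matrix.det (lam ^ M • (1 : Matrix (Fin M × Fin n) (Fin M × Fin n) ℝ) - (cycOf As) ^ M)
      = ∏ i : Fin M,
          Matrix.det (lam ^ M • (1 : Matrix (Fin n) (Fin n) ℝ) - monodromy As i) := by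
  have hpow : (cycOf As) ^ M = bdiagOf (fun j => monodromy As j) := by
    rw [cycOf_pow_s18]
    funext a b
    show (if a.1 = b.1 + ((M : ℕ) : Fin M) then _ else _) = _
    rw [Fin.natCast_self, add_zero]
    rfl
  rw [hpow]
  have h2 : (lam ^ M • (1 : Matrix (Fin M × Fin n) (Fin M × Fin n) ℝ) -
      bdiagOf (fun j => monodromy As j))
      = (Matrix.blockDiagonal
          (fun j => lam ^ M • (1 : Matrix (Fin n) (Fin n) ℝ) - monodromy As j)).submatrix
          (Equiv.prodComm (Fin M) (Fin n)) (Equiv.prodComm (Fin M) (Fin n)) := by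
    ext ⟨i,s⟩ ⟨j,t⟩
    simp only [Matrix.sub_apply, Matrix.smul_apply, Matrix.one_apply, Matrix.submatrix_apply,
      Equiv.prodComm_apply, Prod.swap, Matrix.blockDiagonal_apply, Prod.ext_iff, smul_eq_mul, bdiagOf]
    by_cases h : i = j <;> simp [h, ite_and]
  rw [h2, Matrix.det_submatrix_equiv_self, Matrix.det_blockDiagonal]
end
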